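/- arXiv:cs/9808002 — 3 statements merged into one kernel-verified Lean document; each statement's English description precedes it below -/
import Mathlib

section
/- Telescoping normal form: if 𝒞 is closed under binary unions and binary intersections, then for every m ≥ 1 and every L ∈ DIFF_m(𝒞) there exist sets L₁, L₂, …, L_m ∈ 𝒞 with L₁ ⊇ L₂ ⊇ ⋯ ⊇ L_m such that L = L₁ \ (L₂ \ (L₃ \ ⋯ (L_{m-1} \ L_m) ⋯ )). -/
def DIFF {α : Type*} (𝒞 : Set (Set α)) : ℕ → Set (Set α)
  | 0 => ∅
  | 1 => 𝒞
  | (k + 2) => { L | ∃ L₁ ∈ 𝒞, ∃ L₂ ∈ DIFF 𝒞 (k + 1), L = L₁ \ L₂ }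

def telescope {α : Type*} : List (Set α) → Set α
  | [] => ∅
  | [L] => L
  | L :: L' :: rest => L \ telescope (L' :: rest)

lemma tele_inter {α : Type*} (A : Set α) : ∀ (Ls : List (Set α)),
    telescope (Ls.map (fun M => A ∩ M)) = A ∩ telescope Ls
  | [] => by simp [telescope]
  | [L] => by simp [telescope]
  | L :: L' :: rest => by
    have ih := tele_inter A (L' :: rest)
    simp only [List.map_cons] at ih
    show (A ∩ L) \ telescope ((A ∩ L') :: rest.map (fun M => A ∩ M))
        = A ∩ (L \ telescope (L' :: rest))
    rw [ih]
    ext x; simp only [Set.mem_diff, Set.mem_inter_iff]; tauto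

theorem stmt11 {α : Type*} (𝒞 : Set (Set α))
    (hunion : ∀ A ∈ 𝒞, ∀ B ∈ 𝒞, A ∪ B ∈ 𝒞)
    (hinter : ∀ A ∈ 𝒞, ∀ B ∈ 𝒞, A ∩ B ∈ 𝒞) :
    ∀ m ≥ 1, ∀ L ∈ DIFF 𝒞 m, ∃ Ls : List (Set α),
      Ls.length = m ∧ (∀ A ∈ Ls, A ∈ 𝒞) ∧ List.Chain' (· ⊇ ·) Ls ∧
      L = telescope Ls := by
  have key : ∀ m, ∀ L ∈ DIFF 𝒞 (m + 1), ∃ Ls : List (Set α),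
      Ls.length = m + 1 ∧ (∀ A ∈ Ls, A ∈ 𝒞) ∧ List.Chain' (· ⊇ ·) Ls ∧
      L = telescope Ls := by
    intro m
    induction m with
    | zero =>
      intro L hL
      exact ⟨[L], rfl, by simpa using (show L ∈ 𝒞 from hL), List.isChain_singleton _, rfl⟩
    | succ k ih =>
      rintro L ⟨L₁, hL₁, L₂, hL₂, rfl⟩
      obtain ⟨Ms, hlen, hmem, hchain, rfl⟩ := ih L₂ hL₂
      obtain ⟨M, rest, rfl⟩ : ∃ M rest, Ms = M :: rest := by
        cases Ms with
        | nil => simp at hlen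
        | cons a l => exact ⟨a, l, rfl⟩
      refine ⟨L₁ :: ((M :: rest).map (fun N => L₁ ∩ N)), ?_, ?_, ?_, ?_⟩
      · simpa using hlen
      · intro A hA
        rcases List.mem_cons.1 hA with rfl | hA
        · exact hL₁
        · obtain ⟨N, hN, rfl⟩ := List.mem_map.1 hA
          exact hinter _ hL₁ _ (hmem _ hN)
      · unfold List.Chain' at hchain ⊢
        rw [List.map_cons, List.isChain_cons_cons]
        constructor
        · simp
        · rw [← List.map_cons, List.isChain_map]
          exact hchain.imp (fun a b hab => Set.inter_subset_inter_right _ hab)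
      · show L₁ \ telescope (M :: rest) =
          telescope (L₁ :: ((L₁ ∩ M) :: rest.map (fun N => L₁ ∩ N)))
        show _ = L₁ \ telescope ((L₁ ∩ M) :: rest.map (fun N => L₁ ∩ N))
        rw [show (L₁ ∩ M) :: rest.map (fun N => L₁ ∩ N)
            = (M :: rest).map (fun N => L₁ ∩ N) by simp, tele_inter]
        ext x; simp only [Set.mem_diff, Set.mem_inter_iff]; tauto
  intro m hm L hL
  obtain ⟨k, rfl⟩ := Nat.exists_eq_add_of_le' hm
  exact key k L hL
end

section
/- Upward collapse of the Boolean (difference) hierarchy: suppose 𝒞 ⊆ Set (Set α) is closed under binary unions and binary intersections, and suppose DIFF_m(𝒞) = coDIFF_m(𝒞) for some m ≥ 1. Then DIFF_{m+1}(𝒞) = DIFF_m(𝒞), and consequently DIFF_k(𝒞) = DIFF_m(𝒞) for all k ≥ m. -/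
def coClass {α : Type*} (𝒦 : Set (Set α)) : Set (Set α) := { L | Lᶜ ∈ 𝒦 }

lemma diff_succ_eq {α : Type*} (𝒞 : Set (Set α)) (k : ℕ) (hk : 1 ≤ k) :
    DIFF 𝒞 (k + 1) = { L | ∃ L₁ ∈ 𝒞, ∃ L₂ ∈ DIFF 𝒞 k, L = L₁ \ L₂ } := by
  obtain ⟨j, rfl⟩ : ∃ j, k = j + 1 := ⟨k - 1, by omega⟩
  rfl

lemma diff_inter {α : Type*} (𝒞 : Set (Set α))
    (hinter : ∀ A ∈ 𝒞, ∀ B ∈ 𝒞, A ∩ B ∈ 𝒞) :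
    ∀ k, 1 ≤ k → ∀ A ∈ 𝒞, ∀ B ∈ DIFF 𝒞 k, A ∩ B ∈ DIFF 𝒞 k := by
  intro k
  induction k with
  | zero => omega
  | succ n ih =>
    intro _ A hA B hB
    rcases Nat.lt_or_ge n 1 with hn | hn
    · interval_cases n
      exact hinter A hA B hB
    · rw [diff_succ_eq 𝒞 n hn] at hB ⊢
      obtain ⟨B₁, hB₁, B₂, hB₂, rfl⟩ := hB
      exact ⟨A ∩ B₁, hinter A hA B₁ hB₁, B₂, hB₂, by
        ext x; simp [Set.mem_diff]; tauto⟩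

lemma diff_subset_class {α : Type*} (𝒞 : Set (Set α)) :
    ∀ k, 1 ≤ k → ∀ L ∈ DIFF 𝒞 k, ∃ A ∈ 𝒞, L ⊆ A := by
  intro k
  induction k with
  | zero => omega
  | succ n ih =>
    intro _ L hL
    rcases Nat.lt_or_ge n 1 with hn | hn
    · interval_cases n
      exact ⟨L, hL, subset_rfl⟩
    · rw [diff_succ_eq 𝒞 n hn] at hL
      obtain ⟨L₁, hL₁, L₂, _, rfl⟩ := hL
      exact ⟨L₁, hL₁, Set.diff_subset⟩

theorem stmt16 {α : Type*} (𝒞 : Set (Set α))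
    (hunion : ∀ A ∈ 𝒞, ∀ B ∈ 𝒞, A ∪ B ∈ 𝒞)
    (hinter : ∀ A ∈ 𝒞, ∀ B ∈ 𝒞, A ∩ B ∈ 𝒞)
    (m : ℕ) (hm : 1 ≤ m) (hcoll : DIFF 𝒞 m = coClass (DIFF 𝒞 m)) :
    DIFF 𝒞 (m + 1) = DIFF 𝒞 m ∧ ∀ k ≥ m, DIFF 𝒞 k = DIFF 𝒞 m := by
  have hcompl : ∀ L ∈ DIFF 𝒞 m, Lᶜ ∈ DIFF 𝒞 m := by
    intro L hL
    have : L ∈ coClass (DIFF 𝒞 m) := hcoll ▸ hL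
    exact this
  have hstep : DIFF 𝒞 (m + 1) = DIFF 𝒞 m := by
    rw [diff_succ_eq 𝒞 m hm]
    apply Set.eq_of_subset_of_subset
    · rintro L ⟨L₁, hL₁, L₂, hL₂, rfl⟩
      have h1 : L₁ ∩ L₂ᶜ ∈ DIFF 𝒞 m :=
        diff_inter 𝒞 hinter m hm L₁ hL₁ L₂ᶜ (hcompl L₂ hL₂)
      simpa [Set.diff_eq] using h1
    · intro L hL
      obtain ⟨A, hA, hLA⟩ := diff_subset_class 𝒞 m hm L hL
      refine ⟨A, hA, A ∩ Lᶜ, diff_inter 𝒞 hinter m hm A hA Lᶜ (hcompl L hL), ?_⟩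
      ext x
      simp [Set.mem_diff]
      tauto
  refine ⟨hstep, ?_⟩
  intro k hk
  obtain ⟨j, rfl⟩ : ∃ j, k = m + j := ⟨k - m, by omega⟩
  clear hk
  induction j with
  | zero => rfl
  | succ n ih =>
    have h1 : m ≤ m + n := by omega
    rw [show m + (n + 1) = (m + n) + 1 by omega,
      diff_succ_eq 𝒞 (m + n) (by omega), ih, ← diff_succ_eq 𝒞 m hm, hstep]
end

section
/- Let L₁ ⊇ ⋯ ⊇ L_m and L'₁ ⊇ ⋯ ⊇ L'_m be subsets of α, let L = L₁ \ (L₂ \ ⋯ (L_{m-1} \ L_m)) and L' = L'₁ \ (L'₂ \ ⋯ (L'_{m-1} \ L'_m)). Fix x, and let r' be the largest index with x ∈ L'_{r'} (r' = 0 if x ∉ L'₁). Suppose w ∈ α satisfies: w ∈ L_{r'} if r' > 0, and w ∉ L_s for all s > r'. Then x ∈ L' if and only if w ∈ L. -/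
lemma telescope_mem_iff_odd {α : Type*} (y : α) :
    ∀ (Ls : List (Set α)) (r : ℕ), r ≤ Ls.length →
      (∀ j < Ls.length, y ∈ Ls.getD j ∅ ↔ j < r) →
      (y ∈ telescope Ls ↔ Odd r) := by
  intro Ls
  induction Ls with
  | nil =>
      intro r hr _
      simp only [List.length_nil, Nat.le_zero] at hr
      subst hr
      simp [telescope, Nat.odd_iff]
  | cons L tail ih =>
      intro r hr hpat
      cases tail with
      | nil =>
          simp only [List.length_singleton] at hr
          interval_cases r
          · have := hpat 0 (by simp)
            simp only [List.getD] at this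
            simp [telescope, Nat.odd_iff]
            simpa using this
          · have := hpat 0 (by simp)
            simp only [List.getD] at this
            simp [telescope, Nat.odd_iff]
            simpa using this
      | cons L' rest =>
          have htel : telescope (L :: L' :: rest) = L \ telescope (L' :: rest) := rfl
          rcases Nat.eq_zero_or_pos r with h0 | hpos
          · subst h0
            have : y ∉ L := by
              have := (hpat 0 (by simp)); simp at this; exact this
            simp [htel, Nat.odd_iff, this]
          · have hyL : y ∈ L := (hpat 0 (by simp)).mpr hpos
            have hr' : r - 1 ≤ (L' :: rest).length := by
              simp at hr ⊢; omega
            have hpat' : ∀ j < (L' :: rest).length,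
                y ∈ (L' :: rest).getD j ∅ ↔ j < r - 1 := by
              intro j hj
              have := hpat (j + 1) (by simpa using Nat.succ_lt_succ hj)
              simpa [Nat.lt_sub_iff_add_lt, Nat.add_comm] using this
            have := ih (r - 1) hr' hpat'
            rw [htel]
            simp only [Set.mem_diff, hyL, true_and, this]
            rw [Nat.odd_iff, Nat.odd_iff]
            omega

theorem stmt18 {α : Type*} (m : ℕ) (Ls Ls' : List (Set α))
    (hlen : Ls.length = m) (hlen' : Ls'.length = m)
    (hchain : List.Chain' (· ⊇ ·) Ls) (hchain' : List.Chain' (· ⊇ ·) Ls')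
    (x : α) (r' : ℕ) (hr' : r' ≤ m)
    (hx : ∀ j < m, x ∈ Ls'.getD j ∅ ↔ j < r')
    (w : α)
    (hw1 : r' > 0 → w ∈ Ls.getD (r' - 1) ∅)
    (hw2 : ∀ s, r' ≤ s → s < m → w ∉ Ls.getD s ∅) :
    (x ∈ telescope Ls' ↔ w ∈ telescope Ls) := by
  have hmono : ∀ j k, j ≤ k → k < m → Ls.getD k ∅ ⊆ Ls.getD j ∅ := by
    intro j k hjk hk
    rcases Nat.eq_or_lt_of_le hjk with rfl | hlt
    · exact subset_rfl
    · have hpw : Ls.Pairwise (· ⊇ ·) := (List.isChain_iff_pairwise.mp hchain)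
      have hget := List.pairwise_iff_get.mp hpw ⟨j, by omega⟩ ⟨k, by omega⟩ hlt
      rw [List.getD_eq_getElem _ _ (by omega), List.getD_eq_getElem _ _ (by omega)]
      simpa using hget
  have hwpat : ∀ j < m, w ∈ Ls.getD j ∅ ↔ j < r' := by
    intro j hj
    constructor
    · intro hw
      by_contra h
      exact hw2 j (by omega) hj hw
    · intro hjr
      exact hmono j (r' - 1) (by omega) (by omega) (hw1 (by omega))
  rw [telescope_mem_iff_odd x Ls' r' (by omega) (by rwa [hlen']),
      telescope_mem_iff_odd w Ls r' (by omega) (by rwa [hlen])]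
end
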